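/- Let U_1,…,U_m be independent nonnegative random variables on a finite probability space, and suppose there exist nonnegative reals r_1,…,r_m with r = Σ_j r_j such that for each j: (a) U_j ≤ r always, and (b) for every attainable value u of U_j, u·Pr(U_j ≥ u) ≤ r_j. Then Var(Σ_j U_j) ≤ 2r². -/

import Mathlib

open scoped Classical
open Finset

private lemma pi_sum_prod {m : ℕ} (Ω : Fin m → Type*) [∀ j, Fintype (Ω j)]
    (h : ∀ j, Ω j → ℝ) :
    ∑ ω : (∀ j, Ω j), ∏ j, h j (ω j) = ∏ j, ∑ x, h j x :=
  (Fintype.prod_sum h).symm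

private lemma second_moment_aux {Ω : Type*} (p f : Ω → ℝ) (hp : ∀ ω, 0 ≤ p ω)
    (c M : ℝ) (hc : 0 ≤ c) :
    ∀ s : Finset Ω, (∀ ω ∈ s, f ω ≤ M) →
      (∀ ω ∈ s, f ω * ∑ ω' ∈ s.filter (fun ω' => f ω ≤ f ω'), p ω' ≤ c) →
      ∀ u : ℝ, 0 ≤ u → u ≤ M → (∀ ω ∈ s, u ≤ f ω) →
      ∑ ω ∈ s, p ω * (f ω ^ 2 - u ^ 2) ≤ 2 * c * (M - u) := by
  intro s
  induction s using Finset.strongInduction with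
  | _ s ih =>
    intro hM hcond u hu0 huM hufa
    rcases s.eq_empty_or_nonempty with rfl | hne
    · simp; nlinarith
    · obtain ⟨ω₀, hω₀, hmin⟩ := s.exists_min_image f hne
      set u' := f ω₀ with hu'
      have huu' : u ≤ u' := hufa ω₀ hω₀
      have hu'M : u' ≤ M := hM ω₀ hω₀
      set s' := s.filter (fun ω => u' < f ω) with hs'
      have hss : s' ⊂ s := by
        refine Finset.filter_ssubset.2 ⟨ω₀, hω₀, by simp [hu']⟩
      -- condition transfers to s'
      have hcond' : ∀ ω ∈ s', f ω * ∑ ω' ∈ s'.filter (fun ω' => f ω ≤ f ω'), p ω' ≤ c := by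
        intro ω hω
        have hωlt : u' < f ω := (Finset.mem_filter.1 hω).2
        have : s'.filter (fun ω' => f ω ≤ f ω') = s.filter (fun ω' => f ω ≤ f ω') := by
          ext ω'
          simp only [hs', Finset.mem_filter]
          constructor
          · rintro ⟨⟨h1, _⟩, h3⟩; exact ⟨h1, h3⟩
          · rintro ⟨h1, h3⟩; exact ⟨⟨h1, lt_of_lt_of_le hωlt h3⟩, h3⟩
        rw [this]
        exact hcond ω (Finset.mem_filter.1 hω).1
      have hih := ih s' hss (fun ω hω => hM ω (Finset.mem_filter.1 hω).1) hcond'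
        u' (le_trans hu0 huu') hu'M (fun ω hω => le_of_lt (Finset.mem_filter.1 hω).2)
      -- split the sum
      have hsplit : ∑ ω ∈ s, p ω * (f ω ^ 2 - u ^ 2)
          = (∑ ω ∈ s', p ω * (f ω ^ 2 - u' ^ 2)) + (u' ^ 2 - u ^ 2) * ∑ ω ∈ s, p ω := by
        have h1 : ∑ ω ∈ s, p ω * (f ω ^ 2 - u ^ 2)
            = (∑ ω ∈ s, p ω * (f ω ^ 2 - u' ^ 2)) + (u' ^ 2 - u ^ 2) * ∑ ω ∈ s, p ω := by
          rw [Finset.mul_sum, ← Finset.sum_add_distrib]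
          exact Finset.sum_congr rfl (fun ω _ => by ring)
        rw [h1]
        congr 1
        rw [← Finset.sum_filter_add_sum_filter_not s (fun ω => u' < f ω)]
        have h2 : ∑ ω ∈ s.filter (fun ω => ¬ u' < f ω), p ω * (f ω ^ 2 - u' ^ 2) = 0 := by
          refine Finset.sum_eq_zero (fun ω hω => ?_)
          have h3 := (Finset.mem_filter.1 hω).2
          have h4 := hmin ω (Finset.mem_filter.1 hω).1
          have : f ω = u' := le_antisymm (not_lt.1 h3) h4
          rw [this]; ring
        rw [h2, add_zero]
      rw [hsplit]
      -- bound the second piece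
      have hfsum : s.filter (fun ω' => f ω₀ ≤ f ω') = s := by
        refine Finset.filter_true_of_mem (fun ω hω => hmin ω hω)
      have hc0 := hcond ω₀ hω₀
      rw [hfsum] at hc0
      have hps : (0:ℝ) ≤ ∑ ω ∈ s, p ω := Finset.sum_nonneg (fun ω _ => hp ω)
      have h5 : (u' ^ 2 - u ^ 2) * ∑ ω ∈ s, p ω ≤ 2 * c * (u' - u) := by
        have h6 : (u' ^ 2 - u ^ 2) * ∑ ω ∈ s, p ω
            ≤ 2 * (u' - u) * (u' * ∑ ω ∈ s, p ω) := by nlinarith [mul_nonneg hps (sq_nonneg (u' - u))]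
        calc (u' ^ 2 - u ^ 2) * ∑ ω ∈ s, p ω ≤ 2 * (u' - u) * (u' * ∑ ω ∈ s, p ω) := h6
          _ ≤ 2 * (u' - u) * c := by
              have := mul_le_mul_of_nonneg_left hc0 (by linarith : (0:ℝ) ≤ 2 * (u' - u))
              exact this
          _ = 2 * c * (u' - u) := by ring
      linarith
theorem variance_sum_le {m : ℕ} (Ω : Fin m → Type*) [∀ j, Fintype (Ω j)]
    (p : ∀ j, Ω j → ℝ) (hp : ∀ j ω, 0 ≤ p j ω) (hpsum : ∀ j, ∑ ω, p j ω = 1)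
    (U : ∀ j, Ω j → ℝ) (hU : ∀ j ω, 0 ≤ U j ω)
    (r : Fin m → ℝ) (hr : ∀ j, 0 ≤ r j)
    (hbound : ∀ j ω, U j ω ≤ ∑ j', r j')
    (hrev : ∀ j ω, U j ω * ∑ ω' ∈ univ.filter (fun ω' => U j ω ≤ U j ω'), p j ω' ≤ r j) :
    ∑ ω : (∀ j, Ω j), (∏ j, p j (ω j)) *
        ((∑ j, U j (ω j)) -
          ∑ ω' : (∀ j, Ω j), (∏ j, p j (ω' j)) * (∑ j, U j (ω' j))) ^ 2
      ≤ 2 * (∑ j, r j) ^ 2 := by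
  set R := ∑ j', r j' with hRdef
  have hR0 : 0 ≤ R := Finset.sum_nonneg (fun j _ => hr j)
  set Eg := ∑ ω' : (∀ j, Ω j), (∏ j, p j (ω' j)) * (∑ j, U j (ω' j)) with hEgdef
  -- total mass is one
  have htot : ∑ ω : (∀ j, Ω j), ∏ j, p j (ω j) = 1 := by
    rw [pi_sum_prod]
    exact Finset.prod_eq_one (fun j _ => hpsum j)
  -- single marginal
  have marg1 : ∀ (j : Fin m) (g : Ω j → ℝ),
      ∑ ω : (∀ j, Ω j), (∏ j', p j' (ω j')) * g (ω j) = ∑ x, p j x * g x := by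
    intro j g
    set q := Function.update p j (fun x => p j x * g x) with hqdef
    have hqj : q j = fun x => p j x * g x := by rw [hqdef, Function.update_self]
    have hqo : ∀ j', j' ≠ j → q j' = p j' := fun j' h1 => by
      rw [hqdef, Function.update_of_ne h1]
    have hd : ∀ G : Fin m → ℝ, ∏ j', G j' = (∏ j' ∈ Finset.univ.erase j, G j') * G j :=
      fun G => (Finset.prod_erase_mul _ _ (Finset.mem_univ j)).symm
    have hrw : ∀ ω : (∀ j, Ω j),
        (∏ j', p j' (ω j')) * g (ω j) = ∏ j', q j' (ω j') := by
      intro ω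
      rw [hd (fun j' => p j' (ω j')), hd (fun j' => q j' (ω j'))]
      have e1 : ∏ j' ∈ Finset.univ.erase j, q j' (ω j')
          = ∏ j' ∈ Finset.univ.erase j, p j' (ω j') :=
        Finset.prod_congr rfl fun j' hj' => by rw [hqo j' (Finset.ne_of_mem_erase hj')]
      rw [e1]; simp only [hqj]; ring
    calc ∑ ω : (∀ j, Ω j), (∏ j', p j' (ω j')) * g (ω j)
        = ∑ ω : (∀ j, Ω j), ∏ j', q j' (ω j') := Finset.sum_congr rfl fun ω _ => hrw ω
      _ = ∏ j', ∑ x, q j' x := pi_sum_prod Ω q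
      _ = (∏ j' ∈ Finset.univ.erase j, ∑ x, q j' x) * ∑ x, q j x :=
          hd (fun j' => ∑ x, q j' x)
      _ = ∑ x, p j x * g x := by
          have e2 : ∏ j' ∈ Finset.univ.erase j, ∑ x, q j' x = 1 :=
            Finset.prod_eq_one fun j' hj' => by
              rw [hqo j' (Finset.ne_of_mem_erase hj')]; exact hpsum j'
          rw [e2, one_mul]; simp only [hqj]
  -- pair marginal
  have marg2 : ∀ (j k : Fin m), j ≠ k → ∀ (g : Ω j → ℝ) (h : Ω k → ℝ),
      ∑ ω : (∀ j, Ω j), (∏ j', p j' (ω j')) * (g (ω j) * h (ω k))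
        = (∑ x, p j x * g x) * (∑ x, p k x * h x) := by
    intro j k hjk g h
    have hkj : k ∈ Finset.univ.erase j := Finset.mem_erase.2 ⟨Ne.symm hjk, Finset.mem_univ k⟩
    set q : ∀ j', Ω j' → ℝ :=
      Function.update (Function.update p j (fun x => p j x * g x)) k
        (fun x => p k x * h x) with hqdef
    have hqj : q j = fun x => p j x * g x := by
      rw [hqdef, Function.update_of_ne hjk, Function.update_self]
    have hqk : q k = fun x => p k x * h x := by rw [hqdef, Function.update_self]
    have hqo : ∀ j', j' ≠ j → j' ≠ k → q j' = p j' := by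
      intro j' h1 h2
      rw [hqdef, Function.update_of_ne h2, Function.update_of_ne h1]
    have hd : ∀ G : Fin m → ℝ, ∏ j', G j'
        = ((∏ j' ∈ (Finset.univ.erase j).erase k, G j') * G k) * G j := by
      intro G
      rw [← Finset.prod_erase_mul _ _ (Finset.mem_univ j), ← Finset.prod_erase_mul _ _ hkj]
    have hrw : ∀ ω : (∀ j, Ω j),
        (∏ j', p j' (ω j')) * (g (ω j) * h (ω k)) = ∏ j', q j' (ω j') := by
      intro ω
      rw [hd (fun j' => p j' (ω j')), hd (fun j' => q j' (ω j'))]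
      have e1 : ∏ j' ∈ (Finset.univ.erase j).erase k, q j' (ω j')
          = ∏ j' ∈ (Finset.univ.erase j).erase k, p j' (ω j') :=
        Finset.prod_congr rfl fun j' hj' => by
          rw [hqo j' (Finset.ne_of_mem_erase (Finset.mem_of_mem_erase hj'))
            (Finset.ne_of_mem_erase hj')]
      rw [e1]; simp only [hqk, hqj]; ring
    calc ∑ ω : (∀ j, Ω j), (∏ j', p j' (ω j')) * (g (ω j) * h (ω k))
        = ∑ ω : (∀ j, Ω j), ∏ j', q j' (ω j') := Finset.sum_congr rfl fun ω _ => hrw ω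
      _ = ∏ j', ∑ x, q j' x := pi_sum_prod Ω q
      _ = ((∏ j' ∈ (Finset.univ.erase j).erase k, ∑ x, q j' x) * ∑ x, q k x) * ∑ x, q j x :=
          hd (fun j' => ∑ x, q j' x)
      _ = (∑ x, p j x * g x) * (∑ x, p k x * h x) := by
          have e2 : ∏ j' ∈ (Finset.univ.erase j).erase k, ∑ x, q j' x = 1 :=
            Finset.prod_eq_one fun j' hj' => by
              rw [hqo j' (Finset.ne_of_mem_erase (Finset.mem_of_mem_erase hj'))
                (Finset.ne_of_mem_erase hj')]
              exact hpsum j'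
          rw [e2, one_mul]; simp only [hqk, hqj]; ring
  -- expectation of the sum
  have hEg : Eg = ∑ j, ∑ x, p j x * U j x := by
    rw [hEgdef]
    calc ∑ ω : (∀ j, Ω j), (∏ j, p j (ω j)) * ∑ j, U j (ω j)
        = ∑ ω : (∀ j, Ω j), ∑ j, (∏ j', p j' (ω j')) * U j (ω j) :=
          Finset.sum_congr rfl fun ω _ => Finset.mul_sum _ _ _
      _ = ∑ j, ∑ ω : (∀ j, Ω j), (∏ j', p j' (ω j')) * U j (ω j) := Finset.sum_comm
      _ = ∑ j, ∑ x, p j x * U j x := Finset.sum_congr rfl fun j _ => marg1 j (U j)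
  -- second moment of the sum
  have hV : ∑ ω : (∀ j, Ω j), (∏ j, p j (ω j)) * (∑ j, U j (ω j)) ^ 2
      = ∑ j, ∑ k, ∑ ω : (∀ j, Ω j), (∏ j', p j' (ω j')) * (U j (ω j) * U k (ω k)) := by
    have h1 : ∀ ω : (∀ j, Ω j), (∏ j, p j (ω j)) * (∑ j, U j (ω j)) ^ 2
        = ∑ j, ∑ k, (∏ j', p j' (ω j')) * (U j (ω j) * U k (ω k)) := by
      intro ω
      rw [sq, Finset.sum_mul_sum, Finset.mul_sum]
      exact Finset.sum_congr rfl fun j _ => Finset.mul_sum _ _ _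
    calc ∑ ω : (∀ j, Ω j), (∏ j, p j (ω j)) * (∑ j, U j (ω j)) ^ 2
        = ∑ ω : (∀ j, Ω j), ∑ j, ∑ k, (∏ j', p j' (ω j')) * (U j (ω j) * U k (ω k)) :=
          Finset.sum_congr rfl fun ω _ => h1 ω
      _ = ∑ j, ∑ ω : (∀ j, Ω j), ∑ k, (∏ j', p j' (ω j')) * (U j (ω j) * U k (ω k)) :=
          Finset.sum_comm
      _ = ∑ j, ∑ k, ∑ ω : (∀ j, Ω j), (∏ j', p j' (ω j')) * (U j (ω j) * U k (ω k)) :=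
          Finset.sum_congr rfl fun j _ => Finset.sum_comm
  -- expand the variance
  have expand : ∑ ω : (∀ j, Ω j), (∏ j, p j (ω j)) * ((∑ j, U j (ω j)) - Eg) ^ 2
      = (∑ ω : (∀ j, Ω j), (∏ j, p j (ω j)) * (∑ j, U j (ω j)) ^ 2) - Eg ^ 2 := by
    have h1 : ∀ ω : (∀ j, Ω j), (∏ j, p j (ω j)) * ((∑ j, U j (ω j)) - Eg) ^ 2
        = (∏ j, p j (ω j)) * (∑ j, U j (ω j)) ^ 2
          - 2 * Eg * ((∏ j, p j (ω j)) * (∑ j, U j (ω j)))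
          + Eg ^ 2 * (∏ j, p j (ω j)) := fun ω => by ring
    rw [Finset.sum_congr rfl fun ω _ => h1 ω, Finset.sum_add_distrib,
      Finset.sum_sub_distrib, ← Finset.mul_sum, ← Finset.mul_sum, htot, ← hEgdef]
    ring
  have hEgsq : Eg ^ 2 = ∑ j, ∑ k, (∑ x, p j x * U j x) * (∑ x, p k x * U k x) := by
    rw [hEg, sq, Finset.sum_mul_sum]
  -- variance of sum = sum of per-coordinate "variances"
  have step1 : (∑ ω : (∀ j, Ω j), (∏ j, p j (ω j)) * (∑ j, U j (ω j)) ^ 2) - Eg ^ 2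
      = ∑ j, ((∑ x, p j x * (U j x * U j x))
          - (∑ x, p j x * U j x) * (∑ x, p j x * U j x)) := by
    rw [hV, hEgsq, ← Finset.sum_sub_distrib]
    refine Finset.sum_congr rfl fun j _ => ?_
    rw [← Finset.sum_sub_distrib]
    rw [Finset.sum_eq_single j]
    · exact congrArg (· - (∑ x, p j x * U j x) * (∑ x, p j x * U j x))
        (marg1 j fun x => U j x * U j x)
    · intro k _ hkj
      exact sub_eq_zero.2 (marg2 j k (Ne.symm hkj) (U j) (U k))
    · intro hj; exact absurd (Finset.mem_univ j) hj
  -- per-coordinate second moment bound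
  have key : ∀ j, ∑ x, p j x * (U j x * U j x) ≤ 2 * r j * R := by
    intro j
    have h1 := second_moment_aux (p j) (U j) (hp j) (r j) R (hr j) Finset.univ
      (fun ω _ => hbound j ω) (fun ω _ => hrev j ω) 0 le_rfl hR0 (fun ω _ => hU j ω)
    calc ∑ x, p j x * (U j x * U j x)
        = ∑ x, p j x * (U j x ^ 2 - 0 ^ 2) := Finset.sum_congr rfl fun x _ => by ring
      _ ≤ 2 * r j * (R - 0) := h1
      _ = 2 * r j * R := by ring
  rw [expand, step1]
  calc ∑ j, ((∑ x, p j x * (U j x * U j x))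
        - (∑ x, p j x * U j x) * (∑ x, p j x * U j x))
      ≤ ∑ j, 2 * r j * R := Finset.sum_le_sum fun j _ => by
        nlinarith [key j, mul_self_nonneg (∑ x, p j x * U j x)]
    _ = ∑ j, r j * (2 * R) := Finset.sum_congr rfl fun j _ => by ring
    _ = R * (2 * R) := by rw [← Finset.sum_mul, ← hRdef]
    _ = 2 * R ^ 2 := by ring
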